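/- A 3-regular graph with no perfect matching admits no zero-sum 4-flow. -/

import Mathlib

open Finset SimpleGraph

lemma aux_three {a b c : ℤ} (ha : a ≠ 0) (hb : b ≠ 0) (hc : c ≠ 0)
    (ha3 : a.natAbs ≤ 3) (hb3 : b.natAbs ≤ 3) (hc3 : c.natAbs ≤ 3)
    (hsum : a + b + c = 0) :
    (Even a ∧ ¬Even b ∧ ¬Even c) ∨ (¬Even a ∧ Even b ∧ ¬Even c) ∨
      (¬Even a ∧ ¬Even b ∧ Even c) := by
  simp only [Int.even_iff]
  omega

/-- A 3-regular graph with no perfect matching admits no zero-sum 4-flow. -/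
theorem stmt_9 {V : Type*} [Fintype V] [DecidableEq V] (G : SimpleGraph V)
    [DecidableRel G.Adj] (hreg : G.IsRegularOfDegree 3)
    (hpm : ¬ ∃ M : G.Subgraph, M.IsPerfectMatching) :
    ¬ ∃ f : Sym2 V → ℤ,
      (∀ e ∈ G.edgeFinset, f e ≠ 0 ∧ (f e).natAbs ≤ 3) ∧
      (∀ v : V, ∑ e ∈ G.incidenceFinset v, f e = 0) := by
  rintro ⟨f, hf, hsum⟩
  apply hpm
  refine ⟨{ verts := Set.univ
            Adj := fun v w => G.Adj v w ∧ Even (f s(v, w))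
            adj_sub := fun h => h.1
            edge_vert := fun _ => trivial
            symm := ⟨fun v w h => ⟨h.1.symm, by rw [Sym2.eq_swap]; exact h.2⟩⟩ }, ?_⟩
  rw [SimpleGraph.Subgraph.isPerfectMatching_iff]
  intro v
  -- incidence finset as image of neighbors
  have himg : G.incidenceFinset v = (G.neighborFinset v).image (fun w => s(v, w)) := by
    ext e
    induction e using Sym2.ind with
    | _ x y =>
      simp only [mem_incidenceFinset, mk'_mem_incidenceSet_iff, mem_image,
        mem_neighborFinset]
      constructor
      · rintro ⟨hadj, h | h⟩
        · subst h; exact ⟨y, hadj, rfl⟩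
        · subst h; exact ⟨x, hadj.symm, Sym2.eq_swap⟩
      · rintro ⟨w, hw, h⟩
        rw [Sym2.eq_iff] at h
        rcases h with ⟨rfl, rfl⟩ | ⟨rfl, rfl⟩
        · exact ⟨hw, Or.inl rfl⟩
        · exact ⟨hw.symm, Or.inr rfl⟩
  have hinj : Set.InjOn (fun w => s(v, w)) (G.neighborFinset v) := by
    intro a _ b _ h
    exact (Sym2.congr_right).mp h
  have hsum' : ∑ w ∈ G.neighborFinset v, f s(v, w) = 0 := by
    rw [← Finset.sum_image hinj, ← himg]
    exact hsum v
  have hcard : (G.neighborFinset v).card = 3 := hreg v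
  obtain ⟨x, y, z, hxy, hxz, hyz, hset⟩ := Finset.card_eq_three.mp hcard
  have hx : G.Adj v x := by rw [← mem_neighborFinset, hset]; simp
  have hy : G.Adj v y := by rw [← mem_neighborFinset, hset]; simp
  have hz : G.Adj v z := by rw [← mem_neighborFinset, hset]; simp
  have hsum3 : f s(v, x) + f s(v, y) + f s(v, z) = 0 := by
    rw [hset] at hsum'
    rw [Finset.sum_insert (by simp [hxy, hxz]), Finset.sum_insert (by simp [hyz]),
      Finset.sum_singleton] at hsum'
    linarith
  have hfx := hf s(v, x) (by simp [hx])
  have hfy := hf s(v, y) (by simp [hy])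
  have hfz := hf s(v, z) (by simp [hz])
  have key := aux_three hfx.1 hfy.1 hfz.1 hfx.2 hfy.2 hfz.2 hsum3
  -- a neighbor w of v equals x, y, or z
  have hmem : ∀ w, G.Adj v w → w = x ∨ w = y ∨ w = z := by
    intro w hw
    have : w ∈ G.neighborFinset v := (mem_neighborFinset _ _ _).mpr hw
    rw [hset] at this; simpa using this
  rcases key with ⟨h1, h2, h3⟩ | ⟨h1, h2, h3⟩ | ⟨h1, h2, h3⟩
  · exact ⟨x, ⟨hx, h1⟩, fun w ⟨hw, he⟩ => by
      rcases hmem w hw with rfl | rfl | rfl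
      · rfl
      · exact absurd he h2
      · exact absurd he h3⟩
  · exact ⟨y, ⟨hy, h2⟩, fun w ⟨hw, he⟩ => by
      rcases hmem w hw with rfl | rfl | rfl
      · exact absurd he h1
      · rfl
      · exact absurd he h3⟩
  · exact ⟨z, ⟨hz, h3⟩, fun w ⟨hw, he⟩ => by
      rcases hmem w hw with rfl | rfl | rfl
      · exact absurd he h1
      · exact absurd he h2
      · rfl⟩
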